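/- Let n and k be integers with k ≥ 2 and n ≥ 3k+1. Then there exists an S_{k,1}-free oriented graph on n vertices with at least ⌊(n+k−1)²/4⌋ arcs; that is, ex_ori(n, S_{k,1}) ≥ ⌊(n+k−1)²/4⌋. -/

import Mathlib

/-- An oriented graph on `V`: an arc relation in which no two vertices are
joined by arcs in both directions (in particular it is irreflexive). -/
def IsOriented {V : Type*} (A : V → V → Prop) : Prop :=
  ∀ u v : V, A u v → ¬ A v u

/-- The in-degree of `v`: the number of in-neighbours of `v`. -/
noncomputable def inDeg {V : Type*} (A : V → V → Prop) (v : V) : ℕ :=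
  {u : V | A u v}.ncard

/-- The number of arcs of the digraph. -/
noncomputable def arcCount {V : Type*} (A : V → V → Prop) : ℕ :=
  {p : V × V | A p.1 p.2}.ncard

/-- A copy of `S_{k,1}` (the 1-subdivision of the in-star of order `k+1`)
centered at `v`: pairwise distinct vertices `v, u 0, …, u (k-1), w 0, …, w (k-1)`
with arcs `w i → u i` and `u i → v`. -/
def HasSCopyAt {V : Type*} (A : V → V → Prop) (k : ℕ) (v : V) : Prop :=
  ∃ u w : Fin k → V,
    Function.Injective u ∧ Function.Injective w ∧
    (∀ i j : Fin k, u i ≠ w j) ∧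
    (∀ i : Fin k, u i ≠ v) ∧ (∀ i : Fin k, w i ≠ v) ∧
    (∀ i : Fin k, A (w i) (u i)) ∧ (∀ i : Fin k, A (u i) v)

/-- `A` is `S_{k,1}`-free: no copy of `S_{k,1}` with any center. -/
def SFree {V : Type*} (A : V → V → Prop) (k : ℕ) : Prop :=
  ∀ v : V, ¬ HasSCopyAt A k v

/-- for `k ≥ 2` and `n ≥ 3k+1` there exists an `S_{k,1}`-free
oriented graph on `n` vertices with at least `⌊(n+k-1)²/4⌋` arcs, i.e.
`ex_ori(n, S_{k,1}) ≥ ⌊(n+k-1)²/4⌋`. -/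
theorem exOri_lower_bound (n k : ℕ) (hk : 2 ≤ k) (hn : 3 * k + 1 ≤ n) :
    ∃ A : Fin n → Fin n → Prop,
      IsOriented A ∧ SFree A k ∧ (n + k - 1) ^ 2 / 4 ≤ arcCount A := by
  classical
  set b : ℕ := (n + k - 1) / 2 with hbdef
  have hb2k : 2 * k ≤ b := by omega
  have hbn : b < n := by omega
  set Arc : Fin n → Fin n → Prop := fun x y =>
    (b ≤ x.val ∧ y.val < b) ∨
    (x.val < b ∧ y.val < b ∧
      ((x.val < y.val ∧ y.val + 1 ≤ x.val + k) ∨ y.val + b + 1 ≤ x.val + k)) with hArc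
  refine ⟨Arc, ?_, ?_, ?_⟩
  · intro u v h1 h2
    rw [hArc] at h1 h2
    omega
  · rintro v ⟨u, w, hu_inj, -, -, -, -, hwu, huv⟩
    set S : Finset (Fin n) := {x : Fin n | x.val < b ∧
      ((x.val < v.val ∧ v.val + 1 ≤ x.val + k) ∨ v.val + b + 1 ≤ x.val + k)} with hS
    have hmem : ∀ i, u i ∈ S := by
      intro i
      have h1 := hwu i
      have h2 := huv i
      rw [hArc] at h1 h2
      simp only [hS, Finset.mem_filter, Finset.mem_univ, true_and]
      omega
    have hcard : S.card ≤ k - 1 := by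
      have := Finset.card_le_card_of_injOn (s := S) (t := Finset.range (k - 1))
        (f := fun x : Fin n => (if x.val < v.val then v.val - x.val else v.val + b - x.val) - 1)
        ?_ ?_
      · rwa [Finset.card_range] at this
      · intro x hx
        simp only [hS, Finset.mem_coe, Finset.mem_filter, Finset.mem_univ, true_and] at hx
        simp only [Finset.mem_coe, Finset.mem_range]
        split_ifs <;> omega
      · intro x1 hx1 x2 hx2 hf
        simp only [hS, Finset.mem_coe, Finset.mem_filter, Finset.mem_univ, true_and]
          at hx1 hx2
        apply Fin.ext
        dsimp only at hf
        split_ifs at hf <;> omega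
    have hk' := Finset.card_le_card_of_injOn (s := Finset.univ) (t := S) u (fun i _ => hmem i) hu_inj.injOn
    simp only [Finset.card_univ, Fintype.card_fin] at hk'
    omega
  · -- counting
    have harc : arcCount Arc = ({p : Fin n × Fin n | Arc p.1 p.2} : Set _).ncard := rfl
    have hset : {p : Fin n × Fin n | Arc p.1 p.2}
        = ↑({p : Fin n × Fin n | Arc p.1 p.2} : Finset _) := by
      ext p; simp
    rw [harc, hset, Set.ncard_coe_finset]
    set F1 : Finset (Fin n × Fin n) := {p : Fin n × Fin n | b ≤ p.1.val ∧ p.2.val < b} with hF1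
    set F2 : Finset (Fin n × Fin n) := {p : Fin n × Fin n | p.1.val < b ∧ p.2.val < b ∧
      ((p.1.val < p.2.val ∧ p.2.val + 1 ≤ p.1.val + k) ∨ p.2.val + b + 1 ≤ p.1.val + k)} with hF2
    have hunion : ({p : Fin n × Fin n | Arc p.1 p.2} : Finset _) = F1 ∪ F2 := by
      ext p
      simp only [hArc, hF1, hF2, Finset.mem_union, Finset.mem_filter, Finset.mem_univ, true_and]
    have hdisj : Disjoint F1 F2 := by
      rw [Finset.disjoint_left]
      intro p h1 h2
      simp only [hF1, hF2, Finset.mem_filter, Finset.mem_univ, true_and] at h1 h2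
      omega
    rw [hunion, Finset.card_union_of_disjoint hdisj]
    -- F1 card
    have hF1card : F1.card = (n - b) * b := by
      have : F1 = ({x : Fin n | b ≤ x.val} : Finset _) ×ˢ ({y : Fin n | y.val < b} : Finset _) := by
        ext p
        simp [hF1, Finset.mem_product, and_comm]
      rw [this, Finset.card_product]
      have h1 : ({x : Fin n | b ≤ x.val} : Finset _) = Finset.Ici (⟨b, hbn⟩ : Fin n) := by
        ext x; simp [Fin.le_def]
      have h2 : ({y : Fin n | y.val < b} : Finset _) = Finset.Iio (⟨b, hbn⟩ : Fin n) := by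
        ext y; simp [Fin.lt_def]
      rw [h1, h2, Fin.card_Ici, Fin.card_Iio]
    -- F2 card lower bound
    have hF2card : b * (k - 1) ≤ F2.card := by
      have := Finset.card_le_card_of_injOn
        (s := Finset.range b ×ˢ Finset.range (k - 1))
        (f := fun p : ℕ × ℕ =>
          ((⟨(if p.2 + 1 ≤ p.1 then p.1 - (p.2 + 1) else p.1 + b - (p.2 + 1)) % n,
              Nat.mod_lt _ (by omega)⟩ : Fin n),
           (⟨p.1 % n, Nat.mod_lt _ (by omega)⟩ : Fin n)))
        (t := F2) ?_ ?_
      · rwa [Finset.card_product, Finset.card_range, Finset.card_range] at this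
      · rintro ⟨y, j⟩ hp
        simp only [Finset.mem_coe, Finset.mem_product, Finset.mem_range] at hp
        obtain ⟨hy, hj⟩ := hp
        have hx : (if j + 1 ≤ y then y - (j + 1) else y + b - (j + 1)) % n
            = (if j + 1 ≤ y then y - (j + 1) else y + b - (j + 1)) :=
          Nat.mod_eq_of_lt (by split_ifs <;> omega)
        have hy' : y % n = y := Nat.mod_eq_of_lt (by omega)
        simp only [hF2, Finset.mem_coe, Finset.mem_filter, Finset.mem_univ, true_and, hx, hy']
        split_ifs with h <;> omega
      · rintro ⟨y1, j1⟩ h1 ⟨y2, j2⟩ h2 hf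
        simp only [Finset.mem_coe, Finset.mem_product, Finset.mem_range] at h1 h2
        simp only [Prod.mk.injEq, Fin.mk.injEq] at hf
        obtain ⟨hfa, hfb⟩ := hf
        have hy1 : y1 % n = y1 := Nat.mod_eq_of_lt (by omega)
        have hy2 : y2 % n = y2 := Nat.mod_eq_of_lt (by omega)
        rw [hy1, hy2] at hfb
        subst hfb
        rw [Nat.mod_eq_of_lt (by split_ifs <;> omega),
          Nat.mod_eq_of_lt (by split_ifs <;> omega)] at hfa
        have : j1 = j2 := by split_ifs at hfa <;> omega
        simp [this]
    -- arithmetic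
    have key : (n + k - 1) ^ 2 / 4 ≤ (n - b) * b + b * (k - 1) := by
      have hmb : (n + k - 1) - b = (n - b) + (k - 1) := by omega
      have hsum : (n - b) * b + b * (k - 1) = b * ((n + k - 1) - b) := by
        rw [hmb]; ring
      rw [hsum]
      set m := n + k - 1 with hm
      obtain ⟨q, hq | hq⟩ := Nat.even_or_odd' m
      · have h1 : m ^ 2 = 4 * (q * q) := by rw [hq]; ring
        have h2 : b = q := by omega
        have h3 : m - b = q := by omega
        rw [h1, h3, h2, Nat.mul_div_cancel_left _ (by norm_num)]
      · have h1 : m ^ 2 = 4 * (q * q + q) + 1 := by rw [hq]; ring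
        have h2 : b = q := by omega
        have h3 : m - b = q + 1 := by omega
        have h4 : q * (q + 1) = q * q + q := by ring
        rw [h1, h3, h2, Nat.mul_add_div (by norm_num), h4]
        norm_num
    omega
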